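/- Define, for z > 0, Ai(z) = (z^{1/2}/3) · ( I_{−1/3}((2/3)z^{3/2}) − I_{1/3}((2/3)z^{3/2}) ). Then Ai(z) tends to 3^{−2/3} / Γ(2/3) as z → 0⁺. -/

import Mathlib

open MeasureTheory Real Filter

noncomputable def besselI (ν t : ℝ) : ℝ :=
  ∑' r : ℕ, t ^ (ν + 2 * (r : ℝ)) /
    ((2 : ℝ) ^ (ν + 2 * (r : ℝ)) * (Nat.factorial r : ℝ) * Real.Gamma (ν + (r : ℝ) + 1))

noncomputable def airyC (ν : ℝ) (r : ℕ) : ℝ :=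
  (3:ℝ) ^ (-ν) / (3 * 9 ^ r * ((r.factorial : ℝ) * Real.Gamma (ν + (r:ℝ) + 1)))

lemma airy_gamma_pos (ν : ℝ) (hν : -(1/3) ≤ ν) (r : ℕ) : 0 < Real.Gamma (ν + (r:ℝ) + 1) :=
  Real.Gamma_pos_of_pos (by have : (0:ℝ) ≤ r := Nat.cast_nonneg r; linarith)

lemma airy_gamma_lb (ν : ℝ) (hν : -(1/3) ≤ ν) :
    ∀ r : ℕ, Real.Gamma (ν + 1) * (2/3) ^ r ≤ Real.Gamma (ν + (r:ℝ) + 1)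
  | 0 => by simp
  | (r+1) => by
      have ih := airy_gamma_lb ν hν r
      have hr : (0:ℝ) ≤ r := Nat.cast_nonneg r
      have hpos : (0:ℝ) < ν + (r:ℝ) + 1 := by linarith
      have key : Real.Gamma (ν + ((r:ℕ)+1:ℕ) + 1) = (ν + r + 1) * Real.Gamma (ν + r + 1) := by
        rw [show (ν + (((r:ℕ)+1:ℕ) : ℝ) + 1 : ℝ) = (ν + r + 1) + 1 by push_cast; ring,
          Real.Gamma_add_one hpos.ne']
      have hG := (airy_gamma_pos ν hν r).le
      have h23 : (2/3 : ℝ) ≤ ν + r + 1 := by linarith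
      calc Real.Gamma (ν + 1) * (2/3) ^ (r+1)
          = (2/3) * (Real.Gamma (ν + 1) * (2/3) ^ r) := by ring
        _ ≤ (2/3) * Real.Gamma (ν + r + 1) := by nlinarith
        _ ≤ (ν + r + 1) * Real.Gamma (ν + r + 1) := by nlinarith
        _ = Real.Gamma (ν + ((r:ℕ)+1:ℕ) + 1) := key.symm

lemma airyC_pos (ν : ℝ) (hν : -(1/3) ≤ ν) (r : ℕ) : 0 < airyC ν r := by
  have := airy_gamma_pos ν hν r
  have h3 : (0:ℝ) < (3:ℝ) ^ (-ν) := Real.rpow_pos_of_pos (by norm_num) _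
  have hf : (0:ℝ) < (r.factorial : ℝ) := by exact_mod_cast r.factorial_pos
  unfold airyC; positivity

lemma airyC_le (ν : ℝ) (hν : -(1/3) ≤ ν) (r : ℕ) :
    airyC ν r ≤ (3:ℝ) ^ (-ν) / (3 * Real.Gamma (ν + 1)) * (1/6) ^ r := by
  have hG0 : 0 < Real.Gamma (ν + 1) := by
    have := airy_gamma_pos ν hν 0; simpa using this
  have hlb := airy_gamma_lb ν hν r
  have hf : (1:ℝ) ≤ (r.factorial : ℝ) := by exact_mod_cast r.factorial_pos
  have hGr := airy_gamma_pos ν hν r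
  have h3 : (0:ℝ) < (3:ℝ) ^ (-ν) := Real.rpow_pos_of_pos (by norm_num) _
  have h9 : (0:ℝ) < (9:ℝ)^r := by positivity
  have hden : 3 * Real.Gamma (ν + 1) * 6 ^ r ≤ 3 * 9 ^ r * ((r.factorial : ℝ) * Real.Gamma (ν + (r:ℝ) + 1)) := by
    have h1 : Real.Gamma (ν+1) * 6 ^ r = Real.Gamma (ν+1) * (2/3)^r * 9 ^ r := by
      rw [mul_assoc, ← mul_pow]; norm_num
    have h2 : Real.Gamma (ν+1) * (2/3)^r * 9 ^ r ≤ Real.Gamma (ν + (r:ℝ) + 1) * 9 ^ r :=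
      mul_le_mul_of_nonneg_right hlb h9.le
    have h4 : Real.Gamma (ν + (r:ℝ) + 1) * 9 ^ r ≤ (r.factorial : ℝ) * Real.Gamma (ν + (r:ℝ) + 1) * 9 ^ r := by
      calc Real.Gamma (ν + (r:ℝ) + 1) * 9 ^ r = 1 * (Real.Gamma (ν + (r:ℝ) + 1) * 9 ^ r) := by ring
        _ ≤ (r.factorial : ℝ) * (Real.Gamma (ν + (r:ℝ) + 1) * 9 ^ r) :=
            mul_le_mul_of_nonneg_right hf (by positivity)
        _ = (r.factorial : ℝ) * Real.Gamma (ν + (r:ℝ) + 1) * 9 ^ r := by ring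
    nlinarith
  have hEq : (3:ℝ) ^ (-ν) / (3 * Real.Gamma (ν + 1)) * (1/6) ^ r
      = (3:ℝ) ^ (-ν) / (3 * Real.Gamma (ν + 1) * 6 ^ r) := by
    rw [div_pow, one_pow, div_mul_div_comm, mul_one]
  rw [hEq]
  unfold airyC
  exact div_le_div_of_nonneg_left h3.le (by positivity) hden

lemma airy_term_eq (ν : ℝ) (z : ℝ) (hz : 0 < z) (r : ℕ) :
    z ^ ((1:ℝ)/2) / 3 * ((2/3 * z ^ ((3:ℝ)/2)) ^ (ν + 2*(r:ℝ)) /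
      ((2:ℝ) ^ (ν + 2*(r:ℝ)) * (r.factorial : ℝ) * Real.Gamma (ν + (r:ℝ) + 1))) =
    z ^ ((3:ℝ)/2*ν + 1/2 + 3*(r:ℝ)) * airyC ν r := by
  set C : ℝ := (r.factorial : ℝ) * Real.Gamma (ν + (r:ℝ) + 1) with hC
  rw [show (2:ℝ) ^ (ν + 2*(r:ℝ)) * (r.factorial : ℝ) * Real.Gamma (ν + (r:ℝ) + 1)
      = (2:ℝ) ^ (ν + 2*(r:ℝ)) * C by rw [hC]; ring]
  have h2 : (0:ℝ) ≤ 2/3 := by norm_num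
  have hzp : (0:ℝ) ≤ z ^ ((3:ℝ)/2) := Real.rpow_nonneg hz.le _
  have h9 : ((9:ℝ))^r = (3:ℝ)^(2*(r:ℝ)) := by
    rw [show (2*(r:ℝ)) = ((2*r:ℕ):ℝ) by push_cast; ring, Real.rpow_natCast, pow_mul]; norm_num
  unfold airyC
  rw [Real.mul_rpow h2 hzp, ← Real.rpow_mul hz.le,
    Real.div_rpow (by norm_num : (0:ℝ) ≤ 2) (by norm_num : (0:ℝ) ≤ 3),
    show (3:ℝ)/2*ν + 1/2 + 3*(r:ℝ) = 1/2 + 3/2*(ν+2*r) by ring,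
    Real.rpow_add hz, Real.rpow_neg (by norm_num : (0:ℝ)≤3), h9,
    Real.rpow_add (by norm_num : (0:ℝ)<3)]
  have h3 : ((3:ℝ))^ν ≠ 0 := (Real.rpow_pos_of_pos (by norm_num) _).ne'
  have h3' : ((3:ℝ))^(2*(r:ℝ)) ≠ 0 := (Real.rpow_pos_of_pos (by norm_num) _).ne'
  have h2' : ((2:ℝ))^(ν+2*(r:ℝ)) ≠ 0 := (Real.rpow_pos_of_pos (by norm_num) _).ne'
  rw [Real.rpow_add (by norm_num : (0:ℝ)<2)] at h2' ⊢
  by_cases hC0 : C = 0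
  · have hfne : ((r.factorial:ℝ)) ≠ 0 := by exact_mod_cast r.factorial_ne_zero
    have hg : Real.Gamma (ν + (r:ℝ) + 1) = 0 := by
      have h := hC0; rw [hC] at h; exact (mul_eq_zero.mp h).resolve_left hfne
    simp [hC0, hg]
  have hg : Real.Gamma (ν + (r:ℝ) + 1) ≠ 0 := fun h => hC0 (by rw [hC, h, mul_zero])
  rw [hC]
  field_simp

lemma airy_bessel_tendsto (ν : ℝ) (hν : -(1/3) ≤ ν) :
    Filter.Tendsto (fun z : ℝ => z ^ ((1:ℝ)/2) / 3 * besselI ν (2/3 * z ^ ((3:ℝ)/2)))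
      (nhdsWithin 0 (Set.Ioi 0))
      (nhds (∑' r : ℕ, (0:ℝ) ^ ((3:ℝ)/2*ν + 1/2 + 3*(r:ℝ)) * airyC ν r)) := by
  have hK : (0:ℝ) < (3:ℝ) ^ (-ν) / (3 * Real.Gamma (ν + 1)) := by
    have hG0 : 0 < Real.Gamma (ν + 1) := by
      have := airy_gamma_pos ν hν 0; simpa using this
    have h3 : (0:ℝ) < (3:ℝ) ^ (-ν) := Real.rpow_pos_of_pos (by norm_num) _
    positivity
  have hmain : Filter.Tendsto (fun z : ℝ => ∑' r : ℕ, z ^ ((3:ℝ)/2*ν + 1/2 + 3*(r:ℝ)) * airyC ν r)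
      (nhdsWithin 0 (Set.Ioi 0))
      (nhds (∑' r : ℕ, (0:ℝ) ^ ((3:ℝ)/2*ν + 1/2 + 3*(r:ℝ)) * airyC ν r)) := by
    apply tendsto_tsum_of_dominated_convergence
      (bound := fun r : ℕ => (3:ℝ) ^ (-ν) / (3 * Real.Gamma (ν + 1)) * (1/6) ^ r)
    · exact (summable_geometric_of_lt_one (by norm_num) (by norm_num)).mul_left _
    · intro r
      have he : (0:ℝ) ≤ (3:ℝ)/2*ν + 1/2 + 3*(r:ℝ) := by
        have : (0:ℝ) ≤ r := Nat.cast_nonneg r; linarith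
      have hc : ContinuousAt (fun z : ℝ => z ^ ((3:ℝ)/2*ν + 1/2 + 3*(r:ℝ))) 0 :=
        Real.continuousAt_rpow_const 0 _ (Or.inr he)
      exact ((hc.tendsto.mono_left nhdsWithin_le_nhds).mul_const _)
    · filter_upwards [Ioo_mem_nhdsGT_of_mem (by norm_num : (0:ℝ) ∈ Set.Ico (0:ℝ) 1)] with z hz r
      have hz0 : 0 < z := hz.1
      have he : (0:ℝ) ≤ (3:ℝ)/2*ν + 1/2 + 3*(r:ℝ) := by
        have : (0:ℝ) ≤ r := Nat.cast_nonneg r; linarith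
      have h1 : z ^ ((3:ℝ)/2*ν + 1/2 + 3*(r:ℝ)) ≤ 1 :=
        Real.rpow_le_one hz0.le hz.2.le he
      have h0 : 0 ≤ z ^ ((3:ℝ)/2*ν + 1/2 + 3*(r:ℝ)) := Real.rpow_nonneg hz0.le _
      have hcpos := airyC_pos ν hν r
      rw [Real.norm_eq_abs, abs_of_nonneg (by positivity)]
      calc z ^ ((3:ℝ)/2*ν + 1/2 + 3*(r:ℝ)) * airyC ν r ≤ 1 * airyC ν r :=
            mul_le_mul_of_nonneg_right h1 hcpos.le
        _ = airyC ν r := one_mul _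
        _ ≤ _ := airyC_le ν hν r
  apply hmain.congr'
  filter_upwards [self_mem_nhdsWithin] with z hz
  have hz0 : (0:ℝ) < z := hz
  unfold besselI
  rw [← tsum_mul_left]
  exact tsum_congr fun r => (airy_term_eq ν z hz0 r).symm

/-- `Ai(z) = (z^{1/2}/3)(I_{-1/3}((2/3)z^{3/2}) - I_{1/3}((2/3)z^{3/2}))` tends to
`3^{-2/3}/Γ(2/3)` as `z → 0⁺`. -/
theorem tendsto_Airy_Ai_zero :
    Filter.Tendsto
      (fun z : ℝ => z ^ ((1 : ℝ) / 2) / 3 *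
        (besselI (-(1 / 3)) (2 / 3 * z ^ ((3 : ℝ) / 2)) -
          besselI (1 / 3) (2 / 3 * z ^ ((3 : ℝ) / 2))))
      (nhdsWithin 0 (Set.Ioi 0))
      (nhds ((3 : ℝ) ^ (-(2 : ℝ) / 3) / Real.Gamma (2 / 3))) := by
  have hA := airy_bessel_tendsto (-(1/3)) le_rfl
  have hB := airy_bessel_tendsto (1/3) (by norm_num)
  have hAval : (∑' r : ℕ, (0:ℝ) ^ ((3:ℝ)/2*(-(1/3)) + 1/2 + 3*(r:ℝ)) * airyC (-(1/3)) r)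
      = (3:ℝ) ^ (-(2:ℝ)/3) / Real.Gamma (2/3) := by
    rw [tsum_eq_single 0 (fun r hr => by
      rw [Real.zero_rpow (by
        have : (1:ℝ) ≤ (r:ℝ) := by exact_mod_cast Nat.one_le_iff_ne_zero.mpr hr
        intro h; rw [show (3:ℝ)/2*(-(1/3)) + 1/2 + 3*(r:ℝ) = 3*(r:ℝ) by ring] at h
        linarith), zero_mul])]
    rw [show ((3:ℝ)/2*(-(1/3)) + 1/2 + 3*((0:ℕ):ℝ)) = 0 by norm_num, Real.rpow_zero, one_mul]
    unfold airyC
    rw [show (-(-(1/3)) : ℝ) = 1/3 by norm_num,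
      show (-(1/3) + ((0:ℕ):ℝ) + 1 : ℝ) = 2/3 by norm_num,
      show ((3:ℝ) ^ (-(2:ℝ)/3)) = 3 ^ ((1:ℝ)/3) / 3 by
        rw [show (-(2:ℝ)/3) = 1/3 - 1 by norm_num, Real.rpow_sub (by norm_num), Real.rpow_one]]
    simp [Nat.factorial]
    ring
  have hBval : (∑' r : ℕ, (0:ℝ) ^ ((3:ℝ)/2*(1/3) + 1/2 + 3*(r:ℝ)) * airyC (1/3) r) = 0 := by
    have : ∀ r : ℕ, (0:ℝ) ^ ((3:ℝ)/2*(1/3) + 1/2 + 3*(r:ℝ)) * airyC (1/3) r = 0 := by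
      intro r
      rw [Real.zero_rpow (by
        have : (0:ℝ) ≤ (r:ℝ) := Nat.cast_nonneg r
        intro h; rw [show (3:ℝ)/2*(1/3) + 1/2 + 3*(r:ℝ) = 1 + 3*(r:ℝ) by ring] at h
        linarith), zero_mul]
    rw [tsum_congr this, tsum_zero]
  rw [hAval] at hA
  rw [hBval] at hB
  have h := hA.sub hB
  rw [sub_zero] at h
  exact h.congr (fun z => by ring)
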